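/- Let d ≥ 4 be even. Let γ₁, γ₂ be fixed-point-free involutions of Fin d and let α be a permutation of Fin d satisfying the relation α² · γ₁ · γ₂ = 1. If the subgroup G = ⟨α, γ₁, γ₂⟩ of the symmetric group acts transitively on Fin d, then G is imprimitive: there exists a block Λ of G with 1 < |Λ| < d. -/

import Mathlib

open Equiv Equiv.Perm Subgroup

/-- Everything in the closure conjugates `g` to `g` or `g⁻¹`, provided the generators do. -/
lemma conj_closure_aux {G : Type*} [Group G] {S : Set G} {g : G}
    (hS : ∀ s ∈ S, s * g * s⁻¹ = g ∨ s * g * s⁻¹ = g⁻¹) :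
    ∀ h ∈ Subgroup.closure S, h * g * h⁻¹ = g ∨ h * g * h⁻¹ = g⁻¹ := by
  intro h hh
  induction hh using Subgroup.closure_induction with
  | mem x hx => exact hS x hx
  | one => left; group
  | mul x y hx hy px py =>
    have e : (x * y) * g * (x * y)⁻¹ = x * (y * g * y⁻¹) * x⁻¹ := by group
    rcases py with py | py
    · rw [e, py]; exact px
    · rw [e, py]
      have e2 : x * g⁻¹ * x⁻¹ = (x * g * x⁻¹)⁻¹ := by group
      rcases px with px | px
      · right; rw [e2, px]
      · left; rw [e2, px, inv_inv]
  | inv x hx px =>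
    rcases px with px | px
    · left
      calc x⁻¹ * g * x⁻¹⁻¹ = x⁻¹ * (x * g * x⁻¹) * x⁻¹⁻¹ := by rw [px]
        _ = g := by group
    · right
      have px' : x * g⁻¹ * x⁻¹ = g := by
        rw [show x * g⁻¹ * x⁻¹ = (x * g * x⁻¹)⁻¹ by group, px, inv_inv]
      calc x⁻¹ * g * x⁻¹⁻¹ = x⁻¹ * (x * g⁻¹ * x⁻¹) * x⁻¹⁻¹ := by rw [px']
        _ = g⁻¹ := by group

/-- conjugation and integer powers. -/
lemma conj_zpow_aux {G : Type*} [Group G] (h g : G) (k : ℤ) :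
    h * g ^ k * h⁻¹ = (h * g * h⁻¹) ^ k := by
  have := map_zpow (MulAut.conj h) g k
  simpa [MulAut.conj_apply, mul_assoc] using this

lemma conj_exponent {G : Type*} [Group G] {g h : G}
    (hc : h * g * h⁻¹ = g ∨ h * g * h⁻¹ = g⁻¹) (k : ℤ) :
    ∃ k' : ℤ, h * g ^ k = g ^ k' * h := by
  rcases hc with hc | hc
  · refine ⟨k, ?_⟩
    have := conj_zpow_aux h g k
    rw [hc] at this
    calc h * g ^ k = (h * g ^ k * h⁻¹) * h := by group
      _ = g ^ k * h := by rw [this]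
  · refine ⟨-k, ?_⟩
    have := conj_zpow_aux h g k
    rw [hc] at this
    have : h * g ^ k * h⁻¹ = g ^ (-k) := by rw [this]; group
    calc h * g ^ k = (h * g ^ k * h⁻¹) * h := by group
      _ = g ^ (-k) * h := by rw [this]

lemma perm_conj_apply {X : Type*} (u g : Equiv.Perm X) (k k' : ℤ)
    (h : u * g ^ k = g ^ k' * u) (w : X) : u ((g ^ k) w) = (g ^ k') (u w) := by
  have := congrArg (fun p : Equiv.Perm X => p w) h
  simpa [Equiv.Perm.mul_apply] using this

/-- The `SameCycle` class of `x` under `g` is a block for any subgroup whose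
elements conjugate `g` to `g` or `g⁻¹`. -/
lemma isBlock_sameCycle {d : ℕ} (g : Equiv.Perm (Fin d)) (H : Subgroup (Equiv.Perm (Fin d)))
    (hg : ∀ h ∈ H, h * g * h⁻¹ = g ∨ h * g * h⁻¹ = g⁻¹) (x : Fin d) :
    MulAction.IsBlock H {y | g.SameCycle x y} := by
  have sc : ∀ u ∈ H, ∀ (k : ℤ) (w : Fin d), ∃ k' : ℤ, u ((g ^ k) w) = (g ^ k') (u w) := by
    intro u hu k w
    obtain ⟨k', hk'⟩ := conj_exponent (hg u hu) k
    exact ⟨k', perm_conj_apply u g k k' hk' w⟩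
  have comp : ∀ (a b : ℤ) (w : Fin d), (g ^ a) ((g ^ b) w) = (g ^ (a + b)) w := by
    intro a b w
    rw [← Equiv.Perm.mul_apply, ← zpow_add]
  rw [MulAction.isBlock_iff_smul_eq_of_mem]
  rintro ⟨h, hh⟩ a ⟨i, hi⟩ ⟨j, hj⟩
  have hsmul : ∀ z : Fin d, (⟨h, hh⟩ : H) • z = h z := fun z => rfl
  rw [hsmul] at hj
  -- SameCycle g x (h x)
  obtain ⟨i', hi'⟩ := sc h hh i x
  rw [hi] at hi'  -- h a = (g ^ i') (h x)
  have hxhx : g.SameCycle x (h x) := by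
    refine ⟨-i' + j, ?_⟩
    have e0 : (g ^ i') (h x) = (g ^ j) x := by rw [← hi', hj]
    have e := congrArg (fun w => (g ^ (-i')) w) e0
    simp only [comp] at e
    simpa using e.symm
  ext y
  simp only [Set.mem_smul_set, Set.mem_setOf_eq, hsmul]
  constructor
  · rintro ⟨z, ⟨k, hk⟩, rfl⟩
    obtain ⟨k', hk'⟩ := sc h hh k x
    rw [hk] at hk'  -- h z = (g ^ k') (h x)
    exact hxhx.trans ⟨k', hk'.symm⟩
  · rintro ⟨k, hk⟩
    have hh' : h⁻¹ ∈ H := inv_mem hh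
    obtain ⟨l, hl⟩ := hxhx
    obtain ⟨l', hl'⟩ := sc h⁻¹ hh' l x  -- h⁻¹ ((g^l) x) = (g^l') (h⁻¹ x)
    rw [hl] at hl'  -- h⁻¹ (h x) = (g^l') (h⁻¹ x)
    have hinv : h⁻¹ x = (g ^ (-l')) x := by
      have e0 : (g ^ l') (h⁻¹ x) = x := by rw [← hl']; simp
      have e := congrArg (fun w => (g ^ (-l')) w) e0
      simp only [comp] at e
      simpa using e
    obtain ⟨k', hk'⟩ := sc h⁻¹ hh' k x  -- h⁻¹ ((g^k) x) = (g^k') (h⁻¹ x)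
    rw [hk] at hk'  -- h⁻¹ y = (g^k') (h⁻¹ x)
    refine ⟨h⁻¹ y, ⟨k' + -l', ?_⟩, by simp⟩
    rw [hk', hinv, comp]

/-- Helper: produces a nontrivial block from a suitable permutation `g`. -/
lemma exists_block_of {d : ℕ} (hd : 4 ≤ d) (hdeven : Even d)
    (S : Set (Equiv.Perm (Fin d))) (g : Equiv.Perm (Fin d))
    (hS : ∀ s ∈ S, s * g * s⁻¹ = g ∨ s * g * s⁻¹ = g⁻¹)
    (x : Fin d) (hx : g x ≠ x)
    (hne : (∃ h : Equiv.Perm (Fin d), g = h ^ 2) ∨ g * g = 1) :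
    ∃ Λ : Set (Fin d),
      MulAction.IsBlock (Subgroup.closure S) Λ ∧ 1 < Λ.ncard ∧ Λ.ncard < d := by
  refine ⟨{y | g.SameCycle x y}, isBlock_sameCycle g _ (conj_closure_aux hS) x, ?_⟩
  have hset : {y | g.SameCycle x y} = ↑(g.cycleOf x).support := by
    ext y
    simp [Equiv.Perm.mem_support_cycleOf_iff' hx]
  rw [hset, Set.ncard_coe_finset]
  constructor
  · exact (g.isCycle_cycleOf hx).two_le_card_support
  · by_contra hcon
    push_neg at hcon
    have hle : (g.cycleOf x).support.card ≤ d := by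
      calc (g.cycleOf x).support.card ≤ Finset.univ.card := Finset.card_le_univ _
        _ = d := by simp
    have hcard : (g.cycleOf x).support.card = d := le_antisymm hle hcon
    have huniv : (g.cycleOf x).support = Finset.univ := by
      apply Finset.eq_univ_of_card
      rw [hcard]; simp
    have hcyc : g.IsCycle := by
      refine ⟨x, hx, fun y _ => ?_⟩
      have : y ∈ (g.cycleOf x).support := by rw [huniv]; exact Finset.mem_univ y
      exact (Equiv.Perm.mem_support_cycleOf_iff' hx).1 this
    have hsupp : g.support = Finset.univ := by
      apply Finset.eq_univ_of_card
      apply le_antisymm (by simpa using Finset.card_le_univ g.support)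
      calc Finset.univ.card = (g.cycleOf x).support.card := by rw [huniv]
        _ ≤ g.support.card := Finset.card_le_card (Equiv.Perm.support_cycleOf_le g x)
    have hcardg : g.support.card = d := by rw [hsupp]; simp
    rcases hne with ⟨h, rfl⟩ | hg2
    · have hsign := hcyc.sign
      rw [hcardg, map_pow, Int.units_sq, hdeven.neg_one_pow] at hsign
      exact absurd hsign (by decide)
    · have hord : orderOf g = d := by rw [hcyc.orderOf, hcardg]
      have : orderOf g ∣ 2 := orderOf_dvd_of_pow_eq_one (by rw [pow_two]; exact hg2)
      rw [hord] at this
      have := Nat.le_of_dvd (by norm_num) this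
      omega

theorem hurwitz_group_two_branch_points_all_twos_imprimitive
    (d : ℕ) (hd : 4 ≤ d) (hdeven : Even d)
    (γ₁ γ₂ α : Equiv.Perm (Fin d))
    (hγ₁ : γ₁ * γ₁ = 1) (hγ₁' : ∀ x : Fin d, γ₁ x ≠ x)
    (hγ₂ : γ₂ * γ₂ = 1) (hγ₂' : ∀ x : Fin d, γ₂ x ≠ x)
    (hrel : α ^ 2 * γ₁ * γ₂ = 1)
    (htrans : MulAction.IsPretransitive (Subgroup.closure {α, γ₁, γ₂}) (Fin d)) :
    ∃ Λ : Set (Fin d),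
      MulAction.IsBlock (Subgroup.closure {α, γ₁, γ₂}) Λ ∧ 1 < Λ.ncard ∧ Λ.ncard < d := by
  have hγ₁inv : γ₁⁻¹ = γ₁ := inv_eq_of_mul_eq_one_right hγ₁
  have hγ₂inv : γ₂⁻¹ = γ₂ := inv_eq_of_mul_eq_one_right hγ₂
  have hα2 : α ^ 2 = γ₂ * γ₁ := by
    have h0 : α ^ 2 * (γ₁ * γ₂) = 1 := by rw [← mul_assoc]; exact hrel
    have : α ^ 2 = (γ₁ * γ₂)⁻¹ := by
      calc α ^ 2 = α ^ 2 * (γ₁ * γ₂) * (γ₁ * γ₂)⁻¹ := by group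
        _ = (γ₁ * γ₂)⁻¹ := by rw [h0, one_mul]
    rw [this, mul_inv_rev, hγ₁inv, hγ₂inv]
  by_cases hA : α ^ 2 = 1
  · -- then γ₂ = γ₁
    have hγeq : γ₂ = γ₁ := by
      have h1 : γ₁ * γ₂ = 1 := by
        have := hrel
        rw [hA, one_mul] at this
        exact this
      calc γ₂ = 1 * γ₂ := (one_mul _).symm
        _ = (γ₁ * γ₁) * γ₂ := by rw [hγ₁]
        _ = γ₁ * (γ₁ * γ₂) := by rw [mul_assoc]
        _ = γ₁ := by rw [h1, mul_one]
    have hαinv : α⁻¹ = α := by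
      have : α * α = 1 := by rw [← pow_two]; exact hA
      exact inv_eq_of_mul_eq_one_right this
    by_cases hB : (α * γ₁) ^ 2 = 1
    · -- g = γ₁ : commutes with everything
      have hcomm : α * γ₁ * α⁻¹ = γ₁ := by
        have h1 : α * γ₁ * α * γ₁ = 1 := by
          have := hB; rw [pow_two] at this
          calc α * γ₁ * α * γ₁ = (α * γ₁) * (α * γ₁) := by group
            _ = 1 := this
        have h2 : α * γ₁ * α = γ₁⁻¹ := by
          calc α * γ₁ * α = (α * γ₁ * α * γ₁) * γ₁⁻¹ := by group
            _ = γ₁⁻¹ := by rw [h1, one_mul]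
        rw [hαinv, h2, hγ₁inv]
      have hself : γ₁ * γ₁ * γ₁⁻¹ = γ₁ := by
        rw [hγ₁inv]
        calc γ₁ * γ₁ * γ₁ = 1 * γ₁ := by rw [hγ₁]
          _ = γ₁ := one_mul _
      refine exists_block_of hd hdeven _ γ₁ ?_ ⟨0, by omega⟩ (hγ₁' _) (Or.inr hγ₁)
      intro s hs
      simp only [Set.mem_insert_iff, Set.mem_singleton_iff] at hs
      rcases hs with hs | hs | hs
      · left; rw [hs]; exact hcomm
      · left; rw [hs]; exact hself
      · left; rw [hs, hγeq]; exact hself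
    · -- g = (α * γ₁)^2
      set c := α * γ₁ with hc
      have hαc : α * c * α⁻¹ = c⁻¹ := by
        rw [hαinv, hc, mul_inv_rev, hγ₁inv, hαinv]
        calc α * (α * γ₁) * α = (α * α) * γ₁ * α := by group
          _ = γ₁ * α := by rw [← pow_two, hA, one_mul]
      have hγc : γ₁ * c * γ₁⁻¹ = c⁻¹ := by
        rw [hγ₁inv, hc, mul_inv_rev, hγ₁inv, hαinv]
        calc γ₁ * (α * γ₁) * γ₁ = γ₁ * α * (γ₁ * γ₁) := by group
          _ = γ₁ * α := by rw [hγ₁, mul_one]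
      have hconj2 : ∀ s : Equiv.Perm (Fin d), s * c * s⁻¹ = c⁻¹ → s * c ^ 2 * s⁻¹ = (c ^ 2)⁻¹ := by
        intro s hs
        calc s * c ^ 2 * s⁻¹ = (s * c * s⁻¹) * (s * c * s⁻¹) := by rw [pow_two]; group
          _ = c⁻¹ * c⁻¹ := by rw [hs]
          _ = (c ^ 2)⁻¹ := by group
      obtain ⟨x, hx⟩ : ∃ x : Fin d, (c ^ 2) x ≠ x := by
        by_contra hcon
        push_neg at hcon
        exact hB (Equiv.ext hcon)
      refine exists_block_of hd hdeven _ (c ^ 2) ?_ x hx (Or.inl ⟨c, rfl⟩)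
      intro s hs
      simp only [Set.mem_insert_iff, Set.mem_singleton_iff] at hs
      rcases hs with hs | hs | hs
      · right; rw [hs]; exact hconj2 _ hαc
      · right; rw [hs]; exact hconj2 _ hγc
      · right; rw [hs, hγeq]; exact hconj2 _ hγc
  · -- g = α^2 ≠ 1
    obtain ⟨x, hx⟩ : ∃ x : Fin d, (α ^ 2) x ≠ x := by
      by_contra hcon
      push_neg at hcon
      exact hA (Equiv.ext hcon)
    refine exists_block_of hd hdeven _ (α ^ 2) ?_ x hx (Or.inl ⟨α, rfl⟩)
    intro s hs
    simp only [Set.mem_insert_iff, Set.mem_singleton_iff] at hs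
    rcases hs with hs | hs | hs
    · left; rw [hs]; group
    · right
      rw [hs, hα2, hγ₁inv, mul_inv_rev, hγ₁inv, hγ₂inv]
      calc γ₁ * (γ₂ * γ₁) * γ₁ = γ₁ * γ₂ * (γ₁ * γ₁) := by group
        _ = γ₁ * γ₂ := by rw [hγ₁, mul_one]
    · right
      rw [hs, hα2, hγ₂inv, mul_inv_rev, hγ₁inv, hγ₂inv]
      calc γ₂ * (γ₂ * γ₁) * γ₂ = (γ₂ * γ₂) * (γ₁ * γ₂) := by group
        _ = γ₁ * γ₂ := by rw [hγ₂, one_mul]
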